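/- Let (Ш, →, ↠, ↪) be a two-acyclic factorization system and let X be a closed set. Then Del(X,c) is covered by X in the lattice of closed sets for every c ∈ Cov(X), and every element covered by X in the lattice of closed sets equals Del(X,c) for a unique c ∈ Cov(X). -/

import Mathlib

namespace SDL

variable {S : Type*} {L : Type*}

/-- `X^⊥ = {y | x ↛ y for all x ∈ X}` -/
def perpR (r : S → S → Prop) (X : Set S) : Set S := {y | ∀ x ∈ X, ¬ r x y}

/-- `^⊥Y = {x | x ↛ y for all y ∈ Y}` -/
def perpL (r : S → S → Prop) (Y : Set S) : Set S := {x | ∀ y ∈ Y, ¬ r x y}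

/-- `(X, Y)` is a maximal orthogonal pair for `r`. -/
def IsMOP (r : S → S → Prop) (X Y : Set S) : Prop := Y = perpR r X ∧ X = perpL r Y

/-- The set of maximal orthogonal pairs. -/
def Pairs (r : S → S → Prop) : Type _ := {p : Set S × Set S // IsMOP r p.1 p.2}

/-- `Pairs r` is ordered by containment in the first component. -/
instance (r : S → S → Prop) : PartialOrder (Pairs r) where
  le p q := p.val.1 ⊆ q.val.1
  le_refl _ := Set.Subset.rfl
  le_trans _ _ _ h h' := Set.Subset.trans h h'
  le_antisymm p q h h' := by
    apply Subtype.ext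
    have h1 : p.val.1 = q.val.1 := subset_antisymm h h'
    have h2 : p.val.2 = q.val.2 := by rw [p.prop.1, q.prop.1, h1]
    exact Prod.ext h1 h2

/-- `x ↠ y` iff for all `z`, `y → z` implies `x → z`. -/
def Onto (r : S → S → Prop) (x y : S) : Prop := ∀ z, r y z → r x z

/-- `x ↪ y` iff for all `z`, `z → x` implies `z → y`. -/
def Into (r : S → S → Prop) (x y : S) : Prop := ∀ z, r z x → r z y

/-- `Mult ↠ ↪` relates `x` to `z` iff `x ↠ y ↪ z` for some `y`. -/
def Mult (ont inj : S → S → Prop) (x z : S) : Prop := ∃ y, ont x y ∧ inj y z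

/-- `(S, r, ont, inj)` is a factorization system. -/
structure IsFactSystem (r ont inj : S → S → Prop) : Prop where
  refl : ∀ x, r x x
  onto_iff : ∀ x y, ont x y ↔ Onto r x y
  into_iff : ∀ x y, inj x y ↔ Into r x y
  mult_iff : ∀ x z, r x z ↔ Mult ont inj x z

/-- A two-acyclic factorization system. -/
structure IsTwoAcyclicFS (r ont inj : S → S → Prop) extends IsFactSystem r ont inj : Prop where
  onto_antisymm : ∀ x y, ont x y → ont y x → x = y
  into_antisymm : ∀ x y, inj x y → inj y x → x = y
  brick : ∀ x y, ont x y → inj y x → x = y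

/-- `T(x) = {x' | x ↠ x'}`. -/
def Tset (ont : S → S → Prop) (x : S) : Set S := {x' | ont x x'}

/-- `F(x) = {x' | x' ↪ x}`. -/
def Fset (inj : S → S → Prop) (x : S) : Set S := {x' | inj x' x}

/-- Restriction of a relation to a subset. -/
def restrictRel (r : S → S → Prop) (D : Set S) : D → D → Prop := fun a b => r a b

/-- A subset is closed if it equals its closure `^⊥(X^⊥)`. -/
def IsClosedSet (r : S → S → Prop) (X : Set S) : Prop := perpL r (perpR r X) = X

/-- The lattice of closed sets, ordered by containment. -/
abbrev Closeds (r : S → S → Prop) : Type _ := {X : Set S // IsClosedSet r X}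

/-- `Del(X, c) = X \ {x ∈ X : x ↠ c}`. -/
def Del (ont : S → S → Prop) (X : Set S) (c : S) : Set S := X \ {x | ont x c}

/-- `Cov(X)`: those `c ∈ X` with `Del(X,c)` closed and the closure of `Del(X,c) ∪ {c}` equal
to `X`. -/
def CovS (r ont : S → S → Prop) (X : Set S) : Set S :=
  {c | c ∈ X ∧ IsClosedSet r (Del ont X c) ∧ perpL r (perpR r (Del ont X c ∪ {c})) = X}

/-- Direct forcing: `x ⇝ y` iff `x` is `↠`-minimal in `F(y)` or `↪`-maximal in `T(y)`. -/
def Forces (ont inj : S → S → Prop) (x y : S) : Prop :=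
  (inj x y ∧ ∀ x', inj x' y → ont x x' → x' = x) ∨
  (ont y x ∧ ∀ x', ont y x' → inj x' x → x' = x)

/-- `down X` for a partial order given as a relation (`r x y` meaning `x ≥ y`). -/
def dnRel (r : S → S → Prop) (X : Set S) : Set S := {y | ∃ x ∈ X, r x y}

/-- `up X` for a partial order given as a relation (`r x y` meaning `x ≥ y`). -/
def upRel (r : S → S → Prop) (X : Set S) : Set S := {y | ∃ x ∈ X, r y x}

section OrderNotions

variable [PartialOrder L]

/-- Completely join-irreducible: there is `j⁎` such that `x < j ↔ x ≤ j⁎`. -/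
def CJIrr (j : L) : Prop := ∃ j', ∀ x : L, x < j ↔ x ≤ j'

/-- Completely meet-irreducible: there is `j^*` such that `x > m ↔ x ≥ m^*`. -/
def CMIrr (m : L) : Prop := ∃ m', ∀ x : L, m < x ↔ m' ≤ x

/-- `k = κ(j)`: `k` is the greatest element of `{y | j ⊓ y = j⁎}`. -/
def IsKappa (j k : L) : Prop :=
  ∃ j', (∀ x : L, x < j ↔ x ≤ j') ∧ IsGreatest {y : L | IsGLB ({j, y} : Set L) j'} k

/-- `k = κᵈ(m)`: `k` is the least element of `{x | m ⊔ x = m^*}`. -/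
def IsKappad (m k : L) : Prop :=
  ∃ m', (∀ x : L, m < x ↔ m' ≤ x) ∧ IsLeast {x : L | IsLUB ({m, x} : Set L) m'} k

/-- `L` is a κ-lattice: complete, meet and join generated by irreducibles, with inverse
bijections `κ` and `κᵈ` between the completely join- and meet-irreducibles. -/
def IsKappaLattice (L : Type*) [PartialOrder L] : Prop :=
  (∀ s : Set L, ∃ a, IsLUB s a) ∧
  (∀ s : Set L, ∃ a, IsGLB s a) ∧
  (∀ x : L, IsLUB {j : L | CJIrr j ∧ j ≤ x} x) ∧
  (∀ x : L, IsGLB {m : L | CMIrr m ∧ x ≤ m} x) ∧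
  (∀ j : L, CJIrr j → ∃ k, IsKappa j k ∧ CMIrr k ∧ IsKappad k j) ∧
  (∀ m : L, CMIrr m → ∃ k, IsKappad m k ∧ CJIrr k ∧ IsKappa k m)

/-- Well separated: `z₁ ≰ z₂` implies some completely join-irreducible `j` has `j ≤ z₁` and
`κ(j) ≥ z₂`. -/
def WellSeparated (L : Type*) [PartialOrder L] : Prop :=
  ∀ z₁ z₂ : L, ¬ z₁ ≤ z₂ → ∃ j k : L, CJIrr j ∧ IsKappa j k ∧ j ≤ z₁ ∧ z₂ ≤ k

/-- The set of completely join-irreducible elements, as a type. -/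
abbrev JIrrC (L : Type*) [PartialOrder L] : Type _ := {j : L // CJIrr j}

/-- `i →_L j` iff `i ≰ κ(j)`. -/
def toL (i j : JIrrC L) : Prop := ∃ k : L, IsKappa (j : L) k ∧ ¬ (i : L) ≤ k

/-- `i ↠_L j` iff `i ≥ j` in `L`. -/
def ontoL (i j : JIrrC L) : Prop := (j : L) ≤ (i : L)

/-- `i ↪_L j` iff `κ(i) ≥ κ(j)` in `L`. -/
def intoL (i j : JIrrC L) : Prop :=
  ∃ ki kj : L, IsKappa (i : L) ki ∧ IsKappa (j : L) kj ∧ kj ≤ ki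

/-- A poset is a semidistributive lattice (order-theoretically): binary joins and meets exist,
and both semidistributive laws hold. -/
def IsSDLattice (L : Type*) [PartialOrder L] : Prop :=
  (∀ x y : L, ∃ s, IsLUB ({x, y} : Set L) s) ∧
  (∀ x y : L, ∃ s, IsGLB ({x, y} : Set L) s) ∧
  (∀ x y z sxy sxz myz : L, IsLUB ({x, y} : Set L) sxy → IsLUB ({x, z} : Set L) sxz →
    sxy = sxz → IsGLB ({y, z} : Set L) myz → IsLUB ({x, myz} : Set L) sxy) ∧
  (∀ x y z mxy mxz syz : L, IsGLB ({x, y} : Set L) mxy → IsGLB ({x, z} : Set L) mxz →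
    mxy = mxz → IsLUB ({y, z} : Set L) syz → IsGLB ({x, syz} : Set L) mxy)

/-- `s` is the canonical join representation of `x`. -/
def IsCanonicalJoinRep (s : Set L) (x : L) : Prop :=
  IsLUB s x ∧ (∀ s' : Set L, IsLUB s' x → ∀ a ∈ s, ∃ b ∈ s', a ≤ b) ∧
  IsAntichain (· ≤ ·) s

end OrderNotions

/-- Join semidistributivity. -/
def JoinSD (L : Type*) [Lattice L] : Prop :=
  ∀ x y z : L, x ⊔ y = x ⊔ z → x ⊔ (y ⊓ z) = x ⊔ y

/-- Meet semidistributivity. -/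
def MeetSD (L : Type*) [Lattice L] : Prop :=
  ∀ x y z : L, x ⊓ y = x ⊓ z → x ⊓ (y ⊔ z) = x ⊓ y

/-- Complete join semidistributivity. -/
def CompletelyJoinSD (L : Type*) [CompleteLattice L] : Prop :=
  ∀ (X : Set L) (y z : L), X.Nonempty → (∀ x ∈ X, x ⊔ y = z) → sInf X ⊔ y = z

/-- Complete meet semidistributivity. -/
def CompletelyMeetSD (L : Type*) [CompleteLattice L] : Prop :=
  ∀ (X : Set L) (y z : L), X.Nonempty → (∀ x ∈ X, x ⊓ y = z) → sSup X ⊓ y = z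

end SDL

namespace SDL

section Aux

variable {S : Type*} {r ont inj : S → S → Prop}

lemma perpL_anti {V W : Set S} (hvw : V ⊆ W) : perpL r W ⊆ perpL r V :=
  fun _ hx y hy => hx y (hvw hy)

lemma perpR_anti {V W : Set S} (hvw : V ⊆ W) : perpR r W ⊆ perpR r V :=
  fun _ hx y hy => hx y (hvw hy)

lemma subset_clos (W : Set S) : W ⊆ perpL r (perpR r W) :=
  fun x hx y hy => hy x hx

lemma subset_perpR_perpL (W : Set S) : W ⊆ perpR r (perpL r W) :=
  fun y hy x hx => hx y hy

lemma clos_closed (W : Set S) : IsClosedSet r (perpL r W) :=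
  subset_antisymm (perpL_anti (subset_perpR_perpL W)) (subset_clos _)

lemma clos_mono {V W : Set S} (hvw : V ⊆ W) :
    perpL r (perpR r V) ⊆ perpL r (perpR r W) :=
  perpL_anti (perpR_anti hvw)

lemma clos_subset {W X : Set S} (hX : IsClosedSet r X) (hwx : W ⊆ X) :
    perpL r (perpR r W) ⊆ X := by
  intro x hx
  rw [← hX]
  exact clos_mono hwx hx

lemma inter_closed {A B : Set S} (hA : IsClosedSet r A) (hB : IsClosedSet r B) :
    IsClosedSet r (A ∩ B) := by
  apply subset_antisymm _ (subset_clos _)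
  intro x hx
  constructor
  · rw [← hA]; exact clos_mono Set.inter_subset_left hx
  · rw [← hB]; exact clos_mono Set.inter_subset_right hx

lemma ont_refl (h : IsTwoAcyclicFS r ont inj) (x : S) : ont x x :=
  (h.onto_iff x x).2 (fun _ hz => hz)

lemma mem_of_ont (h : IsTwoAcyclicFS r ont inj) {Z : Set S} (hZ : IsClosedSet r Z)
    {z c : S} (hz : z ∈ Z) (ho : ont z c) : c ∈ Z := by
  rw [← hZ]
  intro w hw hcw
  have hzw : r z w := (h.onto_iff z c).1 ho w hcw
  have : z ∈ perpL r (perpR r Z) := by rw [hZ]; exact hz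
  exact this w hw hzw

/-- Rectangle lemma: if `Y ⋖ X` in closed sets, every `x ∈ X \ Y` relates to every
`y ∈ Y^⊥ \ X^⊥`. -/
lemma rect {X Y : Closeds r} (hYX : Y ⋖ X) {x y : S}
    (hx : x ∈ X.val) (hxY : x ∉ Y.val)
    (hy : y ∈ perpR r Y.val) (hyX : y ∉ perpR r X.val) : r x y := by
  by_contra hrxy
  -- the closed set X ∩ ^⊥{y}
  have hcl : IsClosedSet r (X.val ∩ perpL r {y}) := inter_closed X.prop (clos_closed _)
  set Z : Closeds r := ⟨X.val ∩ perpL r {y}, hcl⟩ with hZdef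
  have hYZ : Y ≤ Z := by
    intro u hu
    exact ⟨hYX.1.le hu, fun w hw => by rw [Set.mem_singleton_iff] at hw; subst hw; exact hy u hu⟩
  have hZX : Z ≤ X := fun u hu => hu.1
  have hZneX : Z ≠ X := by
    intro hEq
    apply hyX
    intro x' hx'
    have hx'Z : x' ∈ Z.val := by rw [hEq]; exact hx'
    exact hx'Z.2 y rfl
  have hZltX : Z < X := lt_of_le_of_ne hZX hZneX
  have : ¬ Y < Z := fun hlt => hYX.2 hlt hZltX
  have hZY : Z = Y := le_antisymm (by
    by_contra hnle
    exact this (lt_of_le_not_ge hYZ hnle)) hYZ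
  have hxZ : x ∈ Z.val := ⟨hx, fun w hw => by rw [Set.mem_singleton_iff] at hw; subst hw; exact hrxy⟩
  rw [hZY] at hxZ
  exact hxY hxZ

end Aux

/-- Theorem 5.1: for a closed set `X`, the sets `Del(X, c)` for `c ∈ Cov(X)` are exactly the
elements covered by `X` in the lattice of closed sets, each arising for a unique `c`. -/
theorem covers_of_closed (S : Type u) (r ont inj : S → S → Prop)
    (h : IsTwoAcyclicFS r ont inj) (X : Closeds r) :
    (∀ c ∈ CovS r ont X.val, ∀ Y : Closeds r, Y.val = Del ont X.val c → Y ⋖ X) ∧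
    (∀ Y : Closeds r, Y ⋖ X → ∃! c : S, c ∈ CovS r ont X.val ∧ Y.val = Del ont X.val c) := by
  constructor
  · -- Part 1: each `Del(X,c)` for `c ∈ Cov(X)` is covered by `X`.
    rintro c ⟨hcX, hDelCl, hclEq⟩ Y hYDel
    have hcY : c ∉ Y.val := by
      rw [hYDel]
      intro hc
      exact hc.2 (ont_refl h c)
    have hYleX : Y ≤ X := by
      intro u hu
      rw [hYDel] at hu
      exact hu.1
    have hYltX : Y < X := lt_of_le_of_ne hYleX (fun hEq => hcY (by rw [hEq]; exact hcX))
    refine ⟨hYltX, ?_⟩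
    intro Z hYZ hZX
    obtain ⟨z, hzZ, hzY⟩ : ∃ z, z ∈ Z.val ∧ z ∉ Y.val := by
      by_contra hno
      push_neg at hno
      exact hYZ.not_ge (fun u hu => hno u hu)
    have hzX : z ∈ X.val := hZX.le hzZ
    have hzont : ont z c := by
      by_contra hno
      exact hzY (by rw [hYDel]; exact ⟨hzX, hno⟩)
    have hcZ : c ∈ Z.val := mem_of_ont h Z.prop hzZ hzont
    have hXZ : X ≤ Z := by
      show X.val ⊆ Z.val
      rw [← hclEq]
      apply clos_subset Z.prop
      intro u hu
      rcases hu with hu | hu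
      · rw [← hYDel] at hu
        exact hYZ.le hu
      · rw [Set.mem_singleton_iff] at hu
        subst hu
        exact hcZ
    exact absurd (le_antisymm hZX.le hXZ) (ne_of_lt hZX)
  · -- Part 2: every cover arises as `Del(X,c)` for a unique `c ∈ Cov(X)`.
    intro Y hYX
    obtain ⟨x₀, hx₀X, hx₀Y⟩ : ∃ x, x ∈ X.val ∧ x ∉ Y.val := by
      by_contra hno
      push_neg at hno
      exact hYX.1.not_ge (fun u hu => hno u hu)
    obtain ⟨y₀, hy₀, hrx₀y₀⟩ : ∃ y, y ∈ perpR r Y.val ∧ r x₀ y := by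
      by_contra hno
      push_neg at hno
      apply hx₀Y
      rw [← Y.prop]
      intro w hw
      exact hno w hw
    obtain ⟨b, hx₀b, hby₀⟩ := (h.mult_iff x₀ y₀).1 hrx₀y₀
    -- `P` cuts out the set `B = X ∩ Y^⊥`
    set P : S → Prop := fun b' => b' ∈ X.val ∧ b' ∈ perpR r Y.val with hP
    have hPb : P b := ⟨mem_of_ont h X.prop hx₀X hx₀b,
      fun u hu hub => hy₀ u hu ((h.into_iff b y₀).1 hby₀ u hub)⟩
    have hnotY : ∀ b', P b' → b' ∉ Y.val := fun b' hb' hbY => hb'.2 b' hbY (h.refl b')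
    have hnotXp : ∀ b', P b' → b' ∉ perpR r X.val := fun b' hb' hbX => hbX b' hb'.1 (h.refl b')
    have hrectP : ∀ b' m, P b' → P m → r b' m := fun b' m hb' hm =>
      rect hYX hb'.1 (hnotY b' hb') hm.2 (hnotXp m hm)
    -- key step: any two elements of `B` are `inj`-related, hence equal
    have hinjP : ∀ b' m, P b' → P m → inj b' m := by
      intro b' m hb' hm
      obtain ⟨p, hbp, hpm⟩ := (h.mult_iff b' m).1 (hrectP b' m hb' hm)
      have hPp : P p := ⟨mem_of_ont h X.prop hb'.1 hbp,
        fun u hu hup => hm.2 u hu ((h.into_iff p m).1 hpm u hup)⟩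
      obtain ⟨s, hps, hsb⟩ := (h.mult_iff p b').1 (hrectP p b' hPp hb')
      have honts : ont b' s := (h.onto_iff b' s).2 (fun z hz =>
        (h.onto_iff b' p).1 hbp z ((h.onto_iff p s).1 hps z hz))
      have hbs : b' = s := h.brick b' s honts hsb
      have hpb : ont p b' := by rw [hbs]; exact hps
      have hpeq : b' = p := h.onto_antisymm b' p hbp hpb
      rwa [← hpeq] at hpm
    have hbunique : ∀ b' m, P b' → P m → b' = m := fun b' m hb' hm =>
      h.into_antisymm b' m (hinjP b' m hb' hm) (hinjP m b' hm hb')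
    have hxont : ∀ x, x ∈ X.val → x ∉ Y.val → ont x b := by
      intro x hx hxY
      obtain ⟨m, hxm, hmb⟩ := (h.mult_iff x b).1 (rect hYX hx hxY hPb.2 (hnotXp b hPb))
      have hPm : P m := ⟨mem_of_ont h X.prop hx hxm,
        fun u hu hum => hPb.2 u hu ((h.into_iff m b).1 hmb u hum)⟩
      rwa [hbunique m b hPm hPb] at hxm
    have hYDel : Y.val = Del ont X.val b := by
      ext x
      constructor
      · intro hx
        refine ⟨hYX.1.le hx, ?_⟩
        intro hont
        exact hnotY b hPb (mem_of_ont h Y.prop hx hont)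
      · rintro ⟨hx, hno⟩
        by_contra hxY
        exact hno (hxont x hx hxY)
    have hclosedDel : IsClosedSet r (Del ont X.val b) := hYDel ▸ Y.prop
    have hclEq : perpL r (perpR r (Del ont X.val b ∪ {b})) = X.val := by
      set Z : Closeds r := ⟨perpL r (perpR r (Del ont X.val b ∪ {b})), clos_closed _⟩ with hZ
      have hZX : Z ≤ X := by
        apply clos_subset X.prop
        intro u hu
        rcases hu with hu | hu
        · exact hu.1
        · rw [Set.mem_singleton_iff] at hu
          subst hu
          exact hPb.1
      have hYZ : Y < Z := by
        have hle : Y ≤ Z := by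
          intro u hu
          apply subset_clos
          left
          rw [← hYDel]
          exact hu
        apply lt_of_le_of_ne hle
        intro hEq
        apply hnotY b hPb
        have hbZ : b ∈ Z.val := subset_clos _ (Or.inr rfl)
        rw [← hEq] at hbZ
        exact hbZ
      have hZeq : Z = X := by
        by_contra hne
        exact hYX.2 hYZ (lt_of_le_of_ne hZX hne)
      exact congrArg Subtype.val hZeq
    refine ⟨b, ⟨⟨hPb.1, hclosedDel, hclEq⟩, hYDel⟩, ?_⟩
    rintro c' ⟨⟨hc'X, -, -⟩, hYc'⟩
    have hc'Y : c' ∉ Y.val := by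
      rw [hYc']
      intro hc
      exact hc.2 (ont_refl h c')
    have hbDel : b ∉ Del ont X.val c' := by
      rw [← hYc']
      exact hnotY b hPb
    have hbc' : ont b c' := by
      by_contra hno
      exact hbDel ⟨hPb.1, hno⟩
    exact h.onto_antisymm c' b (hxont c' hc'X hc'Y) hbc'

end SDL
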